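/- Let E be a finite collection of measurable sets of finite positive measure in a measure space (X, μ), and let Λ = (1/μ(sh(E))) ∑_{R∈E} μ(R) be the average height, where sh(E) = ⋃_{R∈E} R and h_E = ∑_{R∈E} 1_R. For each R ∈ E define g_R = (1_R / h_E)·1_{{h_E ≤ 2Λ}}. Then there exists at least one R ∈ E such that ∫_R g_R dμ ≥ μ(R)/(2Λ). -/

import Mathlib

open MeasureTheory Set
open scoped ENNReal

theorem stmt0 {X : Type*} [MeasurableSpace X] (μ : Measure X)
    {ι : Type*} (s : Finset ι) (hs : s.Nonempty) (E : ι → Set X)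
    (hmeas : ∀ i ∈ s, MeasurableSet (E i))
    (hpos : ∀ i ∈ s, 0 < μ (E i)) (hfin : ∀ i ∈ s, μ (E i) < ⊤)
    (hshpos : 0 < μ (⋃ i ∈ s, E i))
    (Λ : ℝ≥0∞) (hΛ : Λ = (∑ i ∈ s, μ (E i)) / μ (⋃ i ∈ s, E i)) (hΛfin : Λ < ⊤) :
    ∃ i ∈ s,
      μ (E i) / (2 * Λ) ≤
        ∫⁻ x in E i,
          ({y | (∑ j ∈ s, (E j).indicator (1 : X → ℝ≥0∞) y) ≤ 2 * Λ}).indicator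
            (fun y => (E i).indicator (1 : X → ℝ≥0∞) y /
              ∑ j ∈ s, (E j).indicator (1 : X → ℝ≥0∞) y) x ∂μ := by
  classical
  set h : X → ℝ≥0∞ := fun x => ∑ j ∈ s, (E j).indicator (1 : X → ℝ≥0∞) x with hhdef
  set A : Set X := {y | (∑ j ∈ s, (E j).indicator (1 : X → ℝ≥0∞) y) ≤ 2 * Λ} with hAdef
  set sh : Set X := ⋃ i ∈ s, E i with hshdef
  have hmeash : Measurable h := by
    apply Finset.measurable_sum
    intro j hj
    exact measurable_const.indicator (hmeas j hj)
  have hAmeas : MeasurableSet A := hmeash measurableSet_Iic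
  have hshmeas : MeasurableSet sh := s.measurableSet_biUnion hmeas
  have hshfin : μ sh ≠ ⊤ :=
    (lt_of_le_of_lt (measure_biUnion_finset_le s E)
      (ENNReal.sum_lt_top.mpr fun i hi => hfin i hi)).ne
  have hΛ0 : Λ ≠ 0 := by
    obtain ⟨i, hi⟩ := hs
    rw [hΛ]
    refine (ENNReal.div_pos ?_ hshfin).ne'
    exact (lt_of_lt_of_le (hpos i hi)
      (Finset.single_le_sum (f := fun j => μ (E j)) (fun j _ => zero_le) hi)).ne'
  have h2Λ0 : (2 * Λ : ℝ≥0∞) ≠ 0 := by simp [hΛ0]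
  have h2Λtop : (2 * Λ : ℝ≥0∞) ≠ ⊤ := by
    simp [ENNReal.mul_ne_top, hΛfin.ne]
  have hsum : ∑ i ∈ s, μ (E i) = Λ * μ sh := by
    rw [hΛ]
    exact (ENNReal.div_mul_cancel hshpos.ne' hshfin).symm
  have hinth : ∫⁻ x, h x ∂μ = ∑ i ∈ s, μ (E i) := by
    simp only [hhdef]
    rw [lintegral_finset_sum s (f := fun j x => (E j).indicator (1 : X → ℝ≥0∞) x)
      (fun j hj => measurable_const.indicator (hmeas j hj))]
    exact Finset.sum_congr rfl fun j hj => lintegral_indicator_one (hmeas j hj)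
  have hmark : μ {x | 2 * Λ ≤ h x} ≤ μ sh / 2 := by
    calc μ {x | 2 * Λ ≤ h x} ≤ (∫⁻ x, h x ∂μ) / (2 * Λ) :=
          meas_ge_le_lintegral_div hmeash.aemeasurable h2Λ0 h2Λtop
      _ = Λ * μ sh / (Λ * 2) := by rw [hinth, hsum, mul_comm (2 : ℝ≥0∞) Λ]
      _ = μ sh / 2 := ENNReal.mul_div_mul_left _ _ hΛ0 hΛfin.ne
  have hcover : μ sh ≤ μ (A ∩ sh) + μ sh / 2 := by
    calc μ sh ≤ μ ((A ∩ sh) ∪ {x | 2 * Λ ≤ h x}) := by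
          apply measure_mono
          intro x hx
          by_cases hxA : h x ≤ 2 * Λ
          · exact Or.inl ⟨hxA, hx⟩
          · exact Or.inr (lt_of_not_ge hxA).le
      _ ≤ μ (A ∩ sh) + μ {x | 2 * Λ ≤ h x} := measure_union_le _ _
      _ ≤ μ (A ∩ sh) + μ sh / 2 := add_le_add_right hmark _
  have hmain : μ sh / 2 ≤ μ (A ∩ sh) := by
    have := tsub_le_iff_right.mpr hcover
    rwa [ENNReal.sub_half hshfin] at this
  have hkey : ∑ i ∈ s,
      (∫⁻ x in E i, A.indicator (fun y => (E i).indicator (1 : X → ℝ≥0∞) y / h y) x ∂μ)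
      = μ (A ∩ sh) := by
    have gmeas : ∀ i ∈ s,
        Measurable (fun x => A.indicator (fun y => (E i).indicator (1 : X → ℝ≥0∞) y / h y) x) :=
      fun i hi => ((measurable_const.indicator (hmeas i hi)).div hmeash).indicator hAmeas
    calc ∑ i ∈ s,
          (∫⁻ x in E i, A.indicator (fun y => (E i).indicator (1 : X → ℝ≥0∞) y / h y) x ∂μ)
        = ∑ i ∈ s, ∫⁻ x, (E i).indicator
            (fun z => A.indicator (fun y => (E i).indicator (1 : X → ℝ≥0∞) y / h y) z) x ∂μ := by
          refine Finset.sum_congr rfl fun i hi => ?_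
          rw [lintegral_indicator (hmeas i hi)]
      _ = ∫⁻ x, ∑ i ∈ s, (E i).indicator
            (fun z => A.indicator (fun y => (E i).indicator (1 : X → ℝ≥0∞) y / h y) z) x ∂μ := by
          rw [lintegral_finset_sum s
            (f := fun i x => (E i).indicator
              (fun z => A.indicator (fun y => (E i).indicator (1 : X → ℝ≥0∞) y / h y) z) x)
            (fun i hi => (gmeas i hi).indicator (hmeas i hi))]
      _ = ∫⁻ x, (A ∩ sh).indicator (1 : X → ℝ≥0∞) x ∂μ := by
          refine lintegral_congr fun x => ?_
          by_cases hxA : x ∈ A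
          · have step : ∀ i ∈ s, (E i).indicator
                (fun z => A.indicator (fun y => (E i).indicator (1 : X → ℝ≥0∞) y / h y) z) x
                = (E i).indicator (1 : X → ℝ≥0∞) x / h x := by
              intro i hi
              by_cases hx : x ∈ E i
              · simp [Set.indicator_of_mem, hx, hxA]
              · simp [Set.indicator_of_notMem, hx]
            rw [Finset.sum_congr rfl step]
            have hsumdiv : ∑ i ∈ s, (E i).indicator (1 : X → ℝ≥0∞) x / h x = h x / h x := by
              simp only [div_eq_mul_inv, ← Finset.sum_mul]
              rfl
            rw [hsumdiv]
            by_cases hxsh : x ∈ sh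
            · have hx0 : h x ≠ 0 := by
                obtain ⟨i, hi, hxi⟩ := Set.mem_iUnion₂.mp hxsh
                have : (1 : ℝ≥0∞) ≤ h x := by
                  calc (1 : ℝ≥0∞) = (E i).indicator (1 : X → ℝ≥0∞) x := by
                        simp [Set.indicator_of_mem hxi]
                    _ ≤ h x := Finset.single_le_sum
                        (f := fun j => (E j).indicator (1 : X → ℝ≥0∞) x)
                        (fun j _ => zero_le) hi
                exact fun h0 => by simp [h0] at this
              have hxtop : h x ≠ ⊤ := ne_top_of_le_ne_top h2Λtop hxA
              have hmem : x ∈ A ∩ sh := ⟨hxA, hxsh⟩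
              rw [ENNReal.div_self hx0 hxtop, Set.indicator_of_mem hmem]
              rfl
            · have hx0 : h x = 0 := by
                rw [hhdef]
                refine Finset.sum_eq_zero fun i hi => ?_
                have : x ∉ E i := fun hxi => hxsh (Set.mem_biUnion hi hxi)
                simp [Set.indicator_of_notMem this]
              rw [hx0, ENNReal.zero_div,
                Set.indicator_of_notMem (fun hmem : x ∈ A ∩ sh => hxsh hmem.2)]
          · rw [Finset.sum_eq_zero, Set.indicator_of_notMem (fun hmem : x ∈ A ∩ sh => hxA hmem.1)]
            intro i hi
            by_cases hx : x ∈ E i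
            · simp [Set.indicator_of_mem, hx, Set.indicator_of_notMem hxA]
            · simp [Set.indicator_of_notMem, hx]
      _ = μ (A ∩ sh) := lintegral_indicator_one (hAmeas.inter hshmeas)
  by_contra hcon
  push_neg at hcon
  have hlt := ENNReal.sum_lt_sum_of_nonempty hs hcon
  have heq2 : ∑ i ∈ s, μ (E i) / (2 * Λ) = μ sh / 2 := by
    simp only [div_eq_mul_inv, ← Finset.sum_mul]
    rw [hsum, ← div_eq_mul_inv, mul_comm (2 : ℝ≥0∞) Λ]
    exact ENNReal.mul_div_mul_left _ _ hΛ0 hΛfin.ne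
  rw [heq2] at hlt
  have hlt' : (∑ i ∈ s,
      ∫⁻ x in E i, A.indicator (fun y => (E i).indicator (1 : X → ℝ≥0∞) y / h y) x ∂μ)
      < μ sh / 2 := hlt
  rw [hkey] at hlt'
  exact absurd hlt' (not_lt.mpr hmain)
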